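/- Let A, B be self-adjoint operators on a finite-dimensional complex inner product space H and C a self-adjoint operator on a finite-dimensional space K. If the eigenvalue vector of A majorizes that of B, then the eigenvalue vector of C ⊗ A majorizes that of C ⊗ B. -/
import Mathlib


open Finset Matrix
open Polynomial
open scoped Kronecker ComplexOrder

/-- `x` majorizes `y`: every subset-sum of `y` is dominated by some subset-sum of `x`
of the same cardinality (equivalently, all top-`k` partial sums of the non-increasing
rearrangements dominate), and the total sums agree. -/
def Majorizes {ι κ : Type*} [Fintype ι] [Fintype κ] (x : ι → ℝ) (y : κ → ℝ) : Prop :=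
  (∀ t : Finset κ, ∃ s : Finset ι, s.card = t.card ∧ ∑ j ∈ t, y j ≤ ∑ i ∈ s, x i) ∧
    ∑ j, y j = ∑ i, x i


lemma my_charpoly_conj {n : Type*} [Fintype n] [DecidableEq n]
    (W W' M : Matrix n n ℂ) (h1 : W * W' = 1) (h2 : W' * W = 1) :
    (W * M * W').charpoly = M.charpoly := by
  have hcm : charmatrix (W * M * W') = W.map C * charmatrix M * W'.map C := by
    unfold charmatrix
    simp only [RingHom.mapMatrix_apply, mul_sub, sub_mul]
    congr 1
    · have : (W.map C) * (W'.map C) = 1 := by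
        rw [← Matrix.map_mul, h1, Matrix.map_one _ (map_zero C) (map_one C)]
      calc Matrix.scalar n (X : ℂ[X]) = Matrix.scalar n X * ((W.map C) * (W'.map C)) := by
            rw [this, mul_one]
        _ = W.map C * Matrix.scalar n X * W'.map C := by
            rw [← mul_assoc, (Matrix.scalar_commute X (fun r => Commute.all _ _) (W.map C)).eq]
    · rw [← Matrix.map_mul, ← Matrix.map_mul]
  unfold Matrix.charpoly
  rw [hcm, det_mul, det_mul]
  have : (W.map C).det * (W'.map C).det = 1 := by
    rw [← det_mul, ← Matrix.map_mul, h1, Matrix.map_one _ (map_zero C) (map_one C), det_one]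
  ring_nf
  rw [mul_comm, ← mul_assoc]
  nth_rewrite 2 [mul_comm]
  rw [this, one_mul]

lemma my_charpoly_diagonal {n : Type*} [Fintype n] [DecidableEq n] (e : n → ℂ) :
    (Matrix.diagonal e).charpoly = ∏ i, (X - C (e i)) := by
  have : charmatrix (Matrix.diagonal e) = Matrix.diagonal fun i => X - C (e i) := by
    ext i j
    rcases eq_or_ne i j with rfl | h
    · simp
    · simp [h, Matrix.diagonal_apply_ne _ h]
  rw [Matrix.charpoly, this, det_diagonal]

lemma my_eig_multiset {n : Type*} [Fintype n] [DecidableEq n]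
    {M : Matrix n n ℂ} (hM : M.IsHermitian) (W W' : Matrix n n ℂ)
    (h1 : W * W' = 1) (h2 : W' * W = 1) (d : n → ℝ)
    (hdec : M = W * Matrix.diagonal ((↑) ∘ d : n → ℂ) * W') :
    Multiset.map d Finset.univ.val = Multiset.map hM.eigenvalues Finset.univ.val := by
  set V : Matrix n n ℂ := (hM.eigenvectorUnitary : Matrix n n ℂ) with hV
  have hu : V ∈ Matrix.unitaryGroup n ℂ := hM.eigenvectorUnitary.2
  have hV1 : V * star V = 1 := (Matrix.mem_unitaryGroup_iff).mp hu
  have hV2 : star V * V = 1 := (Matrix.mem_unitaryGroup_iff').mp hu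
  have hspec : M = V * Matrix.diagonal ((↑) ∘ hM.eigenvalues : n → ℂ) * star V := by
    simpa using hM.spectral_theorem
  have hchar : (Matrix.diagonal ((↑) ∘ d : n → ℂ)).charpoly
      = (Matrix.diagonal ((↑) ∘ hM.eigenvalues : n → ℂ)).charpoly := by
    calc (Matrix.diagonal ((↑) ∘ d : n → ℂ)).charpoly
        = M.charpoly := by conv_rhs => rw [hdec]
                           exact (my_charpoly_conj W W' _ h1 h2).symm
      _ = _ := by conv_lhs => rw [hspec]
                  exact my_charpoly_conj V (star V) _ hV1 hV2
  rw [my_charpoly_diagonal, my_charpoly_diagonal] at hchar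
  have key : ∀ f : n → ℂ, (∏ i, (X - C (f i))).roots = Multiset.map f Finset.univ.val := by
    intro f
    have : ∏ i, (X - C (f i)) = ((Finset.univ.val.map f).map fun a => X - C a).prod := by
      rw [Multiset.map_map]; rfl
    rw [this, Polynomial.roots_multiset_prod_X_sub_C]
  have : Multiset.map ((↑) ∘ d : n → ℂ) Finset.univ.val
      = Multiset.map ((↑) ∘ hM.eigenvalues : n → ℂ) Finset.univ.val := by
    rw [← key, ← key, hchar]
  rw [← Multiset.map_map ((↑) : ℝ → ℂ) d, ← Multiset.map_map ((↑) : ℝ → ℂ)] at this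
  exact Multiset.map_injective Complex.ofReal_injective this

lemma my_exists_of_le_map {α β : Type*} [DecidableEq α] [DecidableEq β] {f : α → β}
    (m : Multiset β) : ∀ s : Multiset α, m ≤ s.map f → ∃ u ≤ s, u.map f = m := by
  induction m using Multiset.induction_on with
  | empty => exact fun s _ => ⟨0, Multiset.zero_le s, rfl⟩
  | cons a m ih =>
    intro s h
    have ha : a ∈ s.map f := Multiset.mem_of_le h (Multiset.mem_cons_self a m)
    obtain ⟨b, hb, rfl⟩ := Multiset.mem_map.mp ha
    have hs : s = b ::ₘ s.erase b := (Multiset.cons_erase hb).symm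
    rw [hs, Multiset.map_cons] at h
    have hm : m ≤ (s.erase b).map f := (Multiset.cons_le_cons_iff (f b)).mp h
    obtain ⟨u, hu, hum⟩ := ih (s.erase b) hm
    refine ⟨b ::ₘ u, ?_, by rw [Multiset.map_cons, hum]⟩
    rw [hs]
    exact Multiset.cons_le_cons b hu


lemma my_transfer {ι ι' : Type*} [Fintype ι] [Fintype ι'] [DecidableEq ι] [DecidableEq ι']
    {x : ι → ℝ} {x' : ι' → ℝ}
    (hx : Multiset.map x Finset.univ.val = Multiset.map x' Finset.univ.val)
    (s : Finset ι) : ∃ s' : Finset ι', s'.card = s.card ∧ ∑ i ∈ s', x' i = ∑ i ∈ s, x i := by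
  have h1 : Multiset.map x s.val ≤ Multiset.map x' (Finset.univ.val) := by
    rw [← hx]; exact Multiset.map_le_map (Finset.val_le_iff.mpr (Finset.subset_univ s))
  obtain ⟨u, hu, hum⟩ := my_exists_of_le_map _ _ h1
  have hnd : u.Nodup := Multiset.nodup_of_le hu Finset.univ.nodup
  refine ⟨⟨u, hnd⟩, ?_, ?_⟩
  · have := congrArg Multiset.card hum
    simp only [Multiset.card_map] at this
    exact this
  · show (Multiset.map x' u).sum = _
    rw [hum]; rfl

lemma majorizes_congr {ι ι' κ κ' : Type*} [Fintype ι] [Fintype κ] [Fintype ι'] [Fintype κ']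
    [DecidableEq ι] [DecidableEq ι'] [DecidableEq κ] [DecidableEq κ']
    {x : ι → ℝ} {y : κ → ℝ} {x' : ι' → ℝ} {y' : κ' → ℝ}
    (hx : Multiset.map x Finset.univ.val = Multiset.map x' Finset.univ.val)
    (hy : Multiset.map y Finset.univ.val = Multiset.map y' Finset.univ.val)
    (h : Majorizes x y) : Majorizes x' y' := by
  constructor
  · intro t'
    obtain ⟨t, ht, hts⟩ := my_transfer hy.symm t'
    obtain ⟨s, hs, hss⟩ := h.1 t
    obtain ⟨s', hs', hss'⟩ := my_transfer hx s
    exact ⟨s', by omega, by rw [hss', ← hts] at *; linarith⟩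
  · have h1 : ∑ j, y' j = ∑ j, y j := by
      show (Multiset.map y' Finset.univ.val).sum = (Multiset.map y Finset.univ.val).sum
      rw [hy]
    have h2 : ∑ i, x i = ∑ i, x' i := by
      show (Multiset.map x Finset.univ.val).sum = (Multiset.map x' Finset.univ.val).sum
      rw [hx]
    rw [h1, h.2, h2]

lemma my_core {K H : Type*} [Fintype K] [Fintype H] [DecidableEq K] [DecidableEq H]
    (c : K → ℝ) (a b : H → ℝ) (hmaj : Majorizes a b) :
    Majorizes (fun p : K × H => c p.1 * a p.2) (fun p : K × H => c p.1 * b p.2) := by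
  have down : ∀ t : Finset H, ∃ s : Finset H, s.card = t.card ∧ ∑ i ∈ s, a i ≤ ∑ j ∈ t, b j := by
    intro t
    obtain ⟨s₀, h₀c, h₀⟩ := hmaj.1 tᶜ
    refine ⟨s₀ᶜ, ?_, ?_⟩
    · have h1 := Finset.card_le_univ s₀
      have h2 := Finset.card_le_univ t
      simp only [Finset.card_compl] at h₀c ⊢
      omega
    · have e1 : ∑ i ∈ s₀, a i + ∑ i ∈ s₀ᶜ, a i = ∑ i, a i := Finset.sum_add_sum_compl s₀ a
      have e2 : ∑ j ∈ t, b j + ∑ j ∈ tᶜ, b j = ∑ j, b j := Finset.sum_add_sum_compl t b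
      have := hmaj.2
      linarith
  constructor
  · intro t
    -- fibers of t over K
    set ti : K → Finset H := fun i => (t.filter fun p => p.1 = i).image Prod.snd with hti
    have inj : ∀ i : K, ∀ x ∈ t.filter fun p => p.1 = i, ∀ y ∈ t.filter fun p => p.1 = i,
        Prod.snd x = Prod.snd y → x = y := by
      intro i x hx y hy hxy
      simp only [Finset.mem_filter] at hx hy
      exact Prod.ext (hx.2.trans hy.2.symm) hxy
    have hticard : ∀ i, (ti i).card = (t.filter fun p => p.1 = i).card :=
      fun i => Finset.card_image_of_injOn (inj i)
    have htisum : ∀ i, ∑ j ∈ ti i, b j = ∑ p ∈ t.filter fun p => p.1 = i, b p.2 :=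
      fun i => Finset.sum_image (inj i)
    have choice : ∀ i : K, ∃ s : Finset H, s.card = (ti i).card ∧
        c i * ∑ j ∈ ti i, b j ≤ c i * ∑ j ∈ s, a j := by
      intro i
      rcases le_or_gt 0 (c i) with hc | hc
      · obtain ⟨s, hs, hs2⟩ := hmaj.1 (ti i)
        exact ⟨s, hs, mul_le_mul_of_nonneg_left hs2 hc⟩
      · obtain ⟨s, hs, hs2⟩ := down (ti i)
        exact ⟨s, hs, mul_le_mul_of_nonpos_left hs2 hc.le⟩
    choose si hsicard hsisum using choice
    set emb : K → (H ↪ K × H) := fun i => ⟨fun j => (i, j), fun x y hxy => by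
      simpa using congrArg Prod.snd hxy⟩ with hemb
    have hdisj : ∀ x ∈ (Finset.univ : Finset K), ∀ y ∈ (Finset.univ : Finset K), x ≠ y →
        Disjoint ((si x).map (emb x)) ((si y).map (emb y)) := by
      intro x _ y _ hxy
      rw [Finset.disjoint_left]
      intro p hp hq
      simp only [Finset.mem_map, hemb, Function.Embedding.coeFn_mk] at hp hq
      obtain ⟨j, _, rfl⟩ := hp
      obtain ⟨j', _, hj'⟩ := hq
      exact hxy (congrArg Prod.fst hj').symm
    refine ⟨Finset.univ.biUnion fun i => (si i).map (emb i), ?_, ?_⟩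
    · rw [Finset.card_biUnion hdisj]
      have := Finset.card_eq_sum_card_fiberwise
        (f := Prod.fst) (s := t) (t := (Finset.univ : Finset K)) (fun x _ => Finset.mem_univ _)
      rw [this]
      exact Finset.sum_congr rfl fun i _ => by rw [Finset.card_map, hsicard, hticard]
    · have hsum_t : ∑ p ∈ t, c p.1 * b p.2
          = ∑ i, ∑ p ∈ t.filter fun p => p.1 = i, c p.1 * b p.2 :=
        (Finset.sum_fiberwise_of_maps_to (fun x _ => Finset.mem_univ x.1) _).symm
      have hsum_s : ∑ p ∈ Finset.univ.biUnion fun i => (si i).map (emb i), c p.1 * a p.2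
          = ∑ i, c i * ∑ j ∈ si i, a j := by
        rw [Finset.sum_biUnion ?h]
        · refine Finset.sum_congr rfl fun i _ => ?_
          rw [Finset.sum_map, Finset.mul_sum]
          rfl
        · intro x hx y hy hxy
          exact hdisj x (Finset.mem_univ x) y (Finset.mem_univ y) hxy
      rw [hsum_t, hsum_s]
      refine Finset.sum_le_sum fun i _ => ?_
      have : ∑ p ∈ t.filter fun p => p.1 = i, c p.1 * b p.2
          = c i * ∑ j ∈ ti i, b j := by
        rw [htisum, Finset.mul_sum]
        refine Finset.sum_congr rfl fun p hp => ?_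
        rw [(Finset.mem_filter.mp hp).2]
      rw [this]
      exact hsisum i
  · have e1 : ∑ p : K × H, c p.1 * b p.2 = (∑ i, c i) * ∑ j, b j := by
      rw [Finset.sum_mul]
      rw [Fintype.sum_prod_type]
      exact Finset.sum_congr rfl fun i _ => by rw [Finset.mul_sum]
    have e2 : ∑ p : K × H, c p.1 * a p.2 = (∑ i, c i) * ∑ j, a j := by
      rw [Finset.sum_mul]
      rw [Fintype.sum_prod_type]
      exact Finset.sum_congr rfl fun i _ => by rw [Finset.mul_sum]
    rw [e1, e2, hmaj.2]


theorem kronecker_majorizes {dH dK : ℕ}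
    (A B : Matrix (Fin dH) (Fin dH) ℂ) (C : Matrix (Fin dK) (Fin dK) ℂ)
    (hA : A.IsHermitian) (hB : B.IsHermitian) (hC : C.IsHermitian)
    (hmaj : Majorizes hA.eigenvalues hB.eigenvalues)
    (hCA : (C ⊗ₖ A).IsHermitian) (hCB : (C ⊗ₖ B).IsHermitian) :
    Majorizes hCA.eigenvalues hCB.eigenvalues := by
  have key : ∀ (A' : Matrix (Fin dH) (Fin dH) ℂ) (hA' : A'.IsHermitian)
      (hCA' : (C ⊗ₖ A').IsHermitian),
      Multiset.map (fun p : Fin dK × Fin dH => hC.eigenvalues p.1 * hA'.eigenvalues p.2)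
        Finset.univ.val = Multiset.map hCA'.eigenvalues Finset.univ.val := by
    intro A' hA' hCA'
    set U : Matrix (Fin dK) (Fin dK) ℂ := (hC.eigenvectorUnitary : Matrix (Fin dK) (Fin dK) ℂ)
      with hUdef
    set V : Matrix (Fin dH) (Fin dH) ℂ := (hA'.eigenvectorUnitary : Matrix (Fin dH) (Fin dH) ℂ)
      with hVdef
    have hU := hC.eigenvectorUnitary.2
    have hV := hA'.eigenvectorUnitary.2
    have hU1 : U * star U = 1 := (Matrix.mem_unitaryGroup_iff).mp hU
    have hU2 : star U * U = 1 := (Matrix.mem_unitaryGroup_iff').mp hU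
    have hV1 : V * star V = 1 := (Matrix.mem_unitaryGroup_iff).mp hV
    have hV2 : star V * V = 1 := (Matrix.mem_unitaryGroup_iff').mp hV
    have h1 : (U ⊗ₖ V) * (star U ⊗ₖ star V) = 1 := by
      rw [← Matrix.mul_kronecker_mul, hU1, hV1, Matrix.one_kronecker_one]
    have h2 : (star U ⊗ₖ star V) * (U ⊗ₖ V) = 1 := by
      rw [← Matrix.mul_kronecker_mul, hU2, hV2, Matrix.one_kronecker_one]
    refine my_eig_multiset hCA' (U ⊗ₖ V) (star U ⊗ₖ star V) h1 h2 _ ?_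
    have hdC : C = U * Matrix.diagonal ((↑) ∘ hC.eigenvalues : Fin dK → ℂ) * star U := by
      simpa using hC.spectral_theorem
    have hdA : A' = V * Matrix.diagonal ((↑) ∘ hA'.eigenvalues : Fin dH → ℂ) * star V := by
      simpa using hA'.spectral_theorem
    calc C ⊗ₖ A'
        = (U * Matrix.diagonal ((↑) ∘ hC.eigenvalues : Fin dK → ℂ) * star U)
          ⊗ₖ (V * Matrix.diagonal ((↑) ∘ hA'.eigenvalues : Fin dH → ℂ) * star V) := by
          rw [← hdC, ← hdA]
      _ = ((U ⊗ₖ V) * (Matrix.diagonal ((↑) ∘ hC.eigenvalues : Fin dK → ℂ)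
            ⊗ₖ Matrix.diagonal ((↑) ∘ hA'.eigenvalues : Fin dH → ℂ))) * (star U ⊗ₖ star V) := by
          rw [← Matrix.mul_kronecker_mul, ← Matrix.mul_kronecker_mul]
      _ = (U ⊗ₖ V) * Matrix.diagonal
            (((↑) : ℝ → ℂ) ∘ fun p : Fin dK × Fin dH => hC.eigenvalues p.1 * hA'.eigenvalues p.2)
            * (star U ⊗ₖ star V) := by
          rw [Matrix.diagonal_kronecker_diagonal]
          have hfun : (fun mn : Fin dK × Fin dH =>
                (((↑) : ℝ → ℂ) ∘ hC.eigenvalues) mn.1 * (((↑) : ℝ → ℂ) ∘ hA'.eigenvalues) mn.2)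
              = ((↑) : ℝ → ℂ) ∘ fun p : Fin dK × Fin dH =>
                hC.eigenvalues p.1 * hA'.eigenvalues p.2 := by
            funext p
            simp
          rw [hfun]
  exact majorizes_congr (key A hA hCA) (key B hB hCB)
    (my_core hC.eigenvalues hA.eigenvalues hB.eigenvalues hmaj)
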